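/- Define for 1 ≤ j the integers m_j = 2^{j+1} + ε_j where ε_j = 0 if j is odd and ε_j = 1 if j is even. If i ≠ j, k ≠ l, and m_i - m_j = m_k - m_l, then (i,j) = (k,l). -/
import Mathlib

lemma pow2_sum_eq_aux {a b c d : ℕ} (hab : a ≤ b) (hcd : c ≤ d)
    (h : 2 ^ a + 2 ^ b = 2 ^ c + 2 ^ d) : a = c ∧ b = d := by
  have hbd : b = d := by
    have h1 : (2:ℕ) ^ b < 2 ^ (d + 1) := by
      calc (2:ℕ) ^ b < 2 ^ a + 2 ^ b := by have h0 : 0 < (2:ℕ)^a := (by positivity); omega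
        _ = 2 ^ c + 2 ^ d := h
        _ ≤ 2 ^ d + 2 ^ d := by gcongr <;> norm_num
        _ = 2 ^ (d + 1) := by ring
    have h2 : (2:ℕ) ^ d < 2 ^ (b + 1) := by
      calc (2:ℕ) ^ d < 2 ^ c + 2 ^ d := by have h0 : 0 < (2:ℕ)^c := (by positivity); omega
        _ = 2 ^ a + 2 ^ b := h.symm
        _ ≤ 2 ^ b + 2 ^ b := by gcongr <;> norm_num
        _ = 2 ^ (b + 1) := by ring
    have := (Nat.pow_lt_pow_iff_right (a := 2) (by norm_num)).mp h1
    have := (Nat.pow_lt_pow_iff_right (a := 2) (by norm_num)).mp h2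
    omega
  subst hbd
  have : (2:ℕ) ^ a = 2 ^ c := by omega
  exact ⟨Nat.pow_right_injective (by norm_num) this, rfl⟩

lemma pow2_sum_eq {a b c d : ℕ} (h : 2 ^ a + 2 ^ b = 2 ^ c + 2 ^ d) :
    (a = c ∧ b = d) ∨ (a = d ∧ b = c) := by
  rcases le_total a b with hab | hab <;> rcases le_total c d with hcd | hcd
  · exact Or.inl (pow2_sum_eq_aux hab hcd h)
  · have := pow2_sum_eq_aux hab hcd (by omega)
    exact Or.inr ⟨this.1, this.2⟩
  · have := pow2_sum_eq_aux hab hcd (by omega)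
    exact Or.inr ⟨this.2, this.1⟩
  · have := pow2_sum_eq_aux hab hcd (by omega)
    exact Or.inl ⟨this.2, this.1⟩

/-- with `m_j = 2^{j+1} + ε_j` (`ε_j = 0` for odd `j`, `1` for even `j`),
if `i ≠ j`, `k ≠ l` are positive and `m_i - m_j = m_k - m_l`, then `(i,j) = (k,l)`. -/
theorem stmt_5 (m : ℕ → ℤ) (hm : ∀ j, m j = 2 ^ (j + 1) + if Odd j then 0 else 1)
    (i j k l : ℕ) (hi : 1 ≤ i) (hj : 1 ≤ j) (hk : 1 ≤ k) (hl : 1 ≤ l)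
    (hij : i ≠ j) (hkl : k ≠ l) (h : m i - m j = m k - m l) :
    (i, j) = (k, l) := by
  rw [hm, hm, hm, hm] at h
  set D : ℤ := (2 ^ (i + 1) + 2 ^ (l + 1)) - (2 ^ (k + 1) + 2 ^ (j + 1)) with hD
  have hDval : D = (if Odd k then (0:ℤ) else 1) + (if Odd j then (0:ℤ) else 1)
      - (if Odd i then (0:ℤ) else 1) - (if Odd l then (0:ℤ) else 1) := by
    rw [hD]; linarith [h]
  have hdvd : (4:ℤ) ∣ D := by
    rw [hD]
    have h1 : (4:ℤ) ∣ 2 ^ (i + 1) := by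
      have : ((2:ℤ)^2) ∣ 2 ^ (i + 1) := pow_dvd_pow 2 (by omega)
      simpa using this
    have h2 : (4:ℤ) ∣ 2 ^ (j + 1) := by
      have : ((2:ℤ)^2) ∣ 2 ^ (j + 1) := pow_dvd_pow 2 (by omega)
      simpa using this
    have h3 : (4:ℤ) ∣ 2 ^ (k + 1) := by
      have : ((2:ℤ)^2) ∣ 2 ^ (k + 1) := pow_dvd_pow 2 (by omega)
      simpa using this
    have h4 : (4:ℤ) ∣ 2 ^ (l + 1) := by
      have : ((2:ℤ)^2) ∣ 2 ^ (l + 1) := pow_dvd_pow 2 (by omega)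
      simpa using this
    exact dvd_sub (dvd_add h1 h4) (dvd_add h3 h2)
  have hbound : -2 ≤ D ∧ D ≤ 2 := by
    rw [hDval]; split_ifs <;> norm_num
  have hD0 : D = 0 := by omega
  have hZ : (2:ℤ) ^ (i + 1) + 2 ^ (l + 1) = 2 ^ (k + 1) + 2 ^ (j + 1) := by
    rw [hD] at hD0; linarith
  have hN : (2:ℕ) ^ (i + 1) + 2 ^ (l + 1) = 2 ^ (k + 1) + 2 ^ (j + 1) := by
    exact_mod_cast hZ
  rcases pow2_sum_eq hN with ⟨h1, h2⟩ | ⟨h1, h2⟩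
  · have : i = k := by omega
    have : l = j := by omega
    simp_all
  · exact absurd (by omega : i = j) hij
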